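/- The conclusion of the minimal-harmonic-mean lemma fails for non-integer scalings: in ℝ², with Q = Q(0,1), fixed 1/2 < r < 1, Q' = Q(0, 2r−1), and p(x) = 2 on Q' and 1 on Q ∖ Q', every cube Q(x,r) ⊂ Q contains Q', so all such cubes have harmonic mean p_{Q(x,r)} = 2r²/(4r−2r²−1), while the full cube has p_Q = 2/(4r−4r²+1), and p_Q ≤ p_{Q(x,r)}. -/

import Mathlib

open MeasureTheory ENNReal Set Classical

/-- The (closed) square `Q(c,r)` with center `c`, radius `r` (side length `2r`). -/
def cube {n : ℕ} (c : Fin n → ℝ) (r : ℝ) : Set (Fin n → ℝ) := {y | ∀ i, |y i - c i| ≤ r}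

/-- The harmonic mean `p_F = (avg_F 1/p)⁻¹` of `p` on `F`. -/
noncomputable def harmMean {n : ℕ} (p : (Fin n → ℝ) → ℝ) (F : Set (Fin n → ℝ)) : ℝ :=
  (⨍ x in F, (p x)⁻¹ ∂volume)⁻¹

/-- The exponent of the counterexample: `p = 2` on `Q' = Q(0,2r−1)`, `1` elsewhere. -/
noncomputable def pEx (r : ℝ) : (Fin 2 → ℝ) → ℝ := fun x =>
  if x ∈ cube (0 : Fin 2 → ℝ) (2 * r - 1) then 2 else 1

lemma cube_eq {n : ℕ} (c : Fin n → ℝ) (r : ℝ) :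
    cube c r = Set.pi Set.univ (fun i => Set.Icc (c i - r) (c i + r)) := by
  ext y
  simp only [cube, Set.mem_setOf_eq, Set.mem_pi, Set.mem_univ, Set.mem_Icc, abs_le,
    forall_true_left]
  exact forall_congr' fun i => by constructor <;> intro h <;> constructor <;> linarith [h.1, h.2]

lemma cube_meas {n : ℕ} (c : Fin n → ℝ) (r : ℝ) : MeasurableSet (cube c r) := by
  rw [cube_eq]; exact MeasurableSet.univ_pi fun i => measurableSet_Icc

lemma cube_vol {n : ℕ} (c : Fin n → ℝ) (r : ℝ) :
    volume (cube c r) = ENNReal.ofReal (2 * r) ^ n := by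
  rw [cube_eq, volume_pi_pi]
  simp [Real.volume_Icc]
  ring_nf
  rw [ENNReal.ofReal_mul' (by norm_num), mul_pow, ENNReal.ofReal_ofNat]

lemma pEx_inv (r : ℝ) (x : Fin 2 → ℝ) :
    (pEx r x)⁻¹ = 1 - (cube (0 : Fin 2 → ℝ) (2 * r - 1)).indicator (fun _ => (1/2 : ℝ)) x := by
  unfold pEx
  by_cases h : x ∈ cube (0 : Fin 2 → ℝ) (2 * r - 1) <;> simp [h] <;> norm_num

lemma integral_inv_pEx (r : ℝ) (F : Set (Fin 2 → ℝ))
    (hFfin : volume F ≠ ⊤)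
    (hQF : cube (0 : Fin 2 → ℝ) (2 * r - 1) ⊆ F) :
    ∫ x in F, (pEx r x)⁻¹ =
      (volume F).toReal - (volume (cube (0 : Fin 2 → ℝ) (2*r-1))).toReal / 2 := by
  simp only [pEx_inv]
  have hQ'm : MeasurableSet (cube (0 : Fin 2 → ℝ) (2 * r - 1)) := cube_meas _ _
  have h1 : IntegrableOn (fun _ : Fin 2 → ℝ => (1:ℝ)) F volume :=
    integrableOn_const hFfin
  have h2 : IntegrableOn
      ((cube (0 : Fin 2 → ℝ) (2 * r - 1)).indicator (fun _ => (1/2 : ℝ))) F volume :=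
    (integrableOn_const hFfin).indicator hQ'm
  rw [integral_sub h1 h2, setIntegral_const, setIntegral_indicator hQ'm, setIntegral_const]
  rw [Set.inter_eq_right.2 hQF]
  simp [smul_eq_mul, measureReal_def]; ring

lemma cube_vol2_toReal (c : Fin 2 → ℝ) (r : ℝ) (hr : 0 ≤ r) :
    (volume (cube c r)).toReal = (2*r)^2 := by
  rw [cube_vol]
  rw [ENNReal.toReal_pow, ENNReal.toReal_ofReal (by linarith)]

lemma cube_vol2_fin (c : Fin 2 → ℝ) (r : ℝ) : volume (cube c r) ≠ ⊤ := by
  rw [cube_vol]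
  exact ENNReal.pow_ne_top ENNReal.ofReal_ne_top

lemma harm_eq (r : ℝ) (hr1 : 1 / 2 < r) (F : Set (Fin 2 → ℝ)) (c : Fin 2 → ℝ) (s : ℝ)
    (hs : 0 ≤ s) (hFeq : F = cube c s)
    (hQF : cube (0 : Fin 2 → ℝ) (2 * r - 1) ⊆ F) :
    harmMean (pEx r) F = (((2*s)^2)⁻¹ * ((2*s)^2 - (2*(2*r-1))^2 / 2))⁻¹ := by
  unfold harmMean
  rw [setAverage_eq, integral_inv_pEx r F (hFeq ▸ cube_vol2_fin c s) hQF, hFeq,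
    cube_vol2_toReal c s hs, cube_vol2_toReal _ _ (by linarith)]
  simp [smul_eq_mul, measureReal_def, cube_vol2_toReal c s hs]

/-- In `ℝ²`, with `Q = Q(0,1)`, `1/2 < r < 1`, `Q' = Q(0,2r−1)`, and
`p = 2χ_{Q'} + χ_{Q∖Q'}`: every cube `Q(x,r) ⊆ Q` contains `Q'`; all such cubes have
harmonic mean `2r²/(4r−2r²−1)`; the full cube has `p_Q = 2/(4r−4r²+1)`; and
`p_Q ≤ p_{Q(x,r)}` — so the minimal-harmonic-mean lemma fails for non-integer scalings. -/
theorem stmt10 (r : ℝ) (hr1 : 1 / 2 < r) (hr2 : r < 1) :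
    (∀ x : Fin 2 → ℝ, cube x r ⊆ cube (0 : Fin 2 → ℝ) 1 →
        cube (0 : Fin 2 → ℝ) (2 * r - 1) ⊆ cube x r)
      ∧ (∀ x : Fin 2 → ℝ, cube x r ⊆ cube (0 : Fin 2 → ℝ) 1 →
          harmMean (pEx r) (cube x r) = 2 * r ^ 2 / (4 * r - 2 * r ^ 2 - 1))
      ∧ harmMean (pEx r) (cube (0 : Fin 2 → ℝ) 1) = 2 / (4 * r - 4 * r ^ 2 + 1)
      ∧ ∀ x : Fin 2 → ℝ, cube x r ⊆ cube (0 : Fin 2 → ℝ) 1 →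
          harmMean (pEx r) (cube (0 : Fin 2 → ℝ) 1) ≤ harmMean (pEx r) (cube x r) := by
  have hr0 : (0:ℝ) < r := by linarith
  -- (i) containment
  have hcont : ∀ x : Fin 2 → ℝ, cube x r ⊆ cube (0 : Fin 2 → ℝ) 1 →
      cube (0 : Fin 2 → ℝ) (2 * r - 1) ⊆ cube x r := by
    intro x hsub
    have hx : ∀ i, |x i| ≤ 1 - r := by
      intro i
      have h1 : Function.update x i (x i + r) ∈ cube x r := by
        intro j
        rcases eq_or_ne j i with rfl | hj
        · simp [Function.update_self]; linarith [abs_of_nonneg hr0.le]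
        · simp [Function.update_of_ne hj, hr0.le]
      have h2 : Function.update x i (x i - r) ∈ cube x r := by
        intro j
        rcases eq_or_ne j i with rfl | hj
        · simp [Function.update_self, abs_of_nonpos (by linarith : -r ≤ 0), hr0.le]
        · simp [Function.update_of_ne hj, hr0.le]
      have e1 := hsub h1 i
      have e2 := hsub h2 i
      simp [Function.update_self, abs_le] at e1 e2
      rw [abs_le]
      constructor <;> linarith [e1.1, e1.2, e2.1, e2.2]
    intro z hz i
    have h1 := hz i
    have h2 := hx i
    simp only [Pi.zero_apply, sub_zero] at h1
    calc |z i - x i| ≤ |z i| + |x i| := abs_sub _ _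
      _ ≤ (2*r-1) + (1-r) := add_le_add h1 h2
      _ = r := by ring
  refine ⟨hcont, ?_, ?_, ?_⟩
  · -- (ii) small cubes
    intro x hsub
    rw [harm_eq r hr1 _ x r hr0.le rfl (hcont x hsub)]
    have hrne : r ≠ 0 := hr0.ne'
    have e : ((2*r)^2)⁻¹ * ((2*r)^2 - (2*(2*r-1))^2 / 2)
        = (4 * r - 2 * r ^ 2 - 1) / (2 * r ^ 2) := by field_simp; ring
    rw [e, inv_div]
  · -- (iii) full cube
    have hQ : cube (0 : Fin 2 → ℝ) (2 * r - 1) ⊆ cube (0 : Fin 2 → ℝ) 1 := by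
      intro z hz i
      have := hz i
      simp only [Pi.zero_apply, sub_zero] at this ⊢
      calc |z i| ≤ 2*r-1 := this
        _ ≤ 1 := by linarith
    rw [harm_eq r hr1 _ 0 1 one_pos.le rfl hQ]
    have e : (((2:ℝ)*1)^2)⁻¹ * ((2*1)^2 - (2*(2*r-1))^2 / 2)
        = (4 * r - 4 * r ^ 2 + 1) / 2 := by field_simp; ring
    rw [e, inv_div]
  · -- (iv) inequality
    intro x hsub
    have hQ : cube (0 : Fin 2 → ℝ) (2 * r - 1) ⊆ cube (0 : Fin 2 → ℝ) 1 := by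
      intro z hz i
      have := hz i
      simp only [Pi.zero_apply, sub_zero] at this ⊢
      calc |z i| ≤ 2*r-1 := this
        _ ≤ 1 := by linarith
    rw [harm_eq r hr1 _ x r hr0.le rfl (hcont x hsub),
      harm_eq r hr1 _ 0 1 one_pos.le rfl hQ]
    have h1 : (4:ℝ) * r - 2 * r ^ 2 - 1 > 0 := by nlinarith
    have h2 : (4:ℝ) * r - 4 * r ^ 2 + 1 > 0 := by nlinarith
    have hrne : r ≠ 0 := hr0.ne'
    have e1 : (((2:ℝ)*1)^2)⁻¹ * ((2*1)^2 - (2*(2*r-1))^2 / 2)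
        = (4 * r - 4 * r ^ 2 + 1) / 2 := by field_simp; ring
    have e2 : ((2*r)^2)⁻¹ * ((2*r)^2 - (2*(2*r-1))^2 / 2)
        = (4 * r - 2 * r ^ 2 - 1) / (2 * r ^ 2) := by field_simp; ring
    rw [e1, e2, inv_div, inv_div, div_le_div_iff₀ h2 h1]
    nlinarith [mul_nonneg (mul_nonneg (pow_nonneg (by linarith : (0:ℝ) ≤ 2*r-1) 3)
      (by linarith : (0:ℝ) ≤ 1-r)) (by linarith : (0:ℝ) ≤ r+1)]
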